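/- For every n ≥ 2, the recurrence coefficient β_n(t) satisfies the differential-difference equation t β_n'(t) = β_n [2 + 3α_{n−2} β_{n−1} − 3α_{n+1} β_{n+1} + 3α_{n−1}(α_{n−1}² + β_n + 2β_{n−1}) − 3α_n(α_n² + β_n + 2β_{n+1})]. -/

import Mathlib

open MeasureTheory Polynomial Real Filter Set Topology

namespace S17


noncomputable def K (r s x : ℝ) : ℝ := x ^ r * Real.exp (-x ^ 3 - s / x)

noncomputable def M (r s : ℝ) : ℝ := ∫ x in Set.Ioi (0:ℝ), K r s x

lemma K_eq_exp {r s x : ℝ} (hx : 0 < x) :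
    K r s x = Real.exp (Real.log x * r + (-x ^ 3 - s / x)) := by
  rw [K, Real.rpow_def_of_pos hx, ← Real.exp_add]

lemma K_nonneg {r s x : ℝ} (hx : 0 < x) : 0 ≤ K r s x :=
  mul_nonneg (Real.rpow_nonneg hx.le _) (Real.exp_pos _).le

lemma K_contOn (r s : ℝ) : ContinuousOn (K r s) (Set.Ioi 0) := by
  apply ContinuousOn.mul
  · exact fun x hx => (Real.continuousAt_rpow_const x r (Or.inl (ne_of_gt hx))).continuousWithinAt
  · apply Real.continuous_exp.comp_continuousOn
    apply ContinuousOn.sub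
    · exact (continuous_pow 3).continuousOn.neg
    · exact continuousOn_const.div continuousOn_id (fun x hx => ne_of_gt hx)

lemma exponent_tendsto_zero (r c : ℝ) {s : ℝ} (hs : 0 < s) :
    Tendsto (fun x : ℝ => Real.log x * r + (c * x - x ^ 3 - s / x)) (𝓝[>] 0) atBot := by
  have key : ∀ x ∈ Set.Ioi (0:ℝ),
      (x * Real.log x * r + (c * x ^ 2 - x ^ 4 - s)) * x⁻¹
        = Real.log x * r + (c * x - x ^ 3 - s / x) := by
    intro x hx
    have hx' : x ≠ 0 := ne_of_gt hx
    field_simp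
  have h1 : Tendsto (fun x : ℝ => x * Real.log x * r + (c * x ^ 2 - x ^ 4 - s)) (𝓝[>] 0)
      (𝓝 (-s)) := by
    have hxl : Tendsto (fun x : ℝ => x * Real.log x) (𝓝[>] 0) (𝓝 0) := by
      have := (Real.continuous_mul_log.tendsto 0).mono_left (nhdsWithin_le_nhds (s := Set.Ioi 0))
      simpa using this
    have h2 : Tendsto (fun x : ℝ => c * x ^ 2 - x ^ 4 - s) (𝓝[>] 0) (𝓝 (-s)) := by
      have : Tendsto (fun x : ℝ => c * x ^ 2 - x ^ 4 - s) (𝓝 0) (𝓝 (c * 0 ^ 2 - 0 ^ 4 - s)) :=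
        (((continuous_const.mul (continuous_pow 2)).sub (continuous_pow 4)).sub
          continuous_const).tendsto 0
      simpa using this.mono_left (nhdsWithin_le_nhds (s := Set.Ioi 0))
    simpa using (hxl.mul_const r).add h2
  have h3 : Tendsto (fun x : ℝ => x⁻¹) (𝓝[>] (0:ℝ)) atTop := tendsto_inv_nhdsGT_zero
  have := h1.neg_mul_atTop (by linarith : -s < 0) h3
  exact (tendsto_congr' (eventually_nhdsWithin_of_forall key)).mp this

lemma exponent_tendsto_atTop (r c : ℝ) {s : ℝ} (hs : 0 < s) :
    Tendsto (fun x : ℝ => Real.log x * r + (c * x - x ^ 3 - s / x)) atTop atBot := by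
  apply tendsto_atBot_mono' atTop _ tendsto_neg_atTop_atBot
  filter_upwards [Filter.eventually_ge_atTop (1:ℝ),
    Filter.eventually_ge_atTop (Real.sqrt (|r| + |c| + 1))] with x hx1 hx2
  have hx0 : 0 < x := lt_of_lt_of_le one_pos hx1
  have hlog : Real.log x * r ≤ x * |r| := by
    have h1 : 0 ≤ Real.log x := Real.log_nonneg hx1
    have h2 : Real.log x ≤ x := (Real.log_le_sub_one_of_pos hx0).trans (by linarith)
    calc Real.log x * r ≤ Real.log x * |r| := by
          exact mul_le_mul_of_nonneg_left (le_abs_self r) h1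
      _ ≤ x * |r| := mul_le_mul_of_nonneg_right h2 (abs_nonneg r)
  have hc : c * x ≤ |c| * x := mul_le_mul_of_nonneg_right (le_abs_self c) hx0.le
  have hs' : 0 ≤ s / x := div_nonneg hs.le hx0.le
  have hx2' : |r| + |c| + 1 ≤ x ^ 2 := by
    have := Real.sq_sqrt (by positivity : (0:ℝ) ≤ |r| + |c| + 1)
    nlinarith [Real.sqrt_nonneg (|r| + |c| + 1)]
  have hkey := mul_le_mul_of_nonneg_left hx2' hx0.le
  nlinarith [abs_nonneg r, abs_nonneg c]

lemma K_tendsto_zero (r : ℝ) {s : ℝ} (hs : 0 < s) :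
    Tendsto (K r s) (𝓝[>] 0) (𝓝 0) := by
  have h := (Real.tendsto_exp_atBot).comp (exponent_tendsto_zero r 0 hs)
  apply h.congr'
  filter_upwards [self_mem_nhdsWithin] with x hx
  simp only [Function.comp]
  rw [K_eq_exp hx]
  norm_num

lemma K_tendsto_atTop (r : ℝ) {s : ℝ} (hs : 0 < s) :
    Tendsto (K r s) atTop (𝓝 0) := by
  have h := (Real.tendsto_exp_atBot).comp (exponent_tendsto_atTop r 0 hs)
  apply h.congr'
  filter_upwards [Filter.eventually_gt_atTop (0:ℝ)] with x hx
  simp only [Function.comp]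
  rw [K_eq_exp hx]
  norm_num

lemma bounded_of_tendsto_zero {f : ℝ → ℝ} (hc : ContinuousOn f (Set.Ioi 0))
    (h0 : Tendsto f (𝓝[>] 0) (𝓝 0)) (hT : Tendsto f atTop (𝓝 0)) :
    ∃ C : ℝ, ∀ x ∈ Set.Ioi (0:ℝ), |f x| ≤ C := by
  have h0' : ∀ᶠ x in 𝓝[>] (0:ℝ), |f x| ≤ 1 := by
    have := h0.eventually (eventually_abs_sub_lt 0 one_pos)
    filter_upwards [this] with x hx; simpa using hx.le
  rw [eventually_nhdsWithin_iff, Metric.eventually_nhds_iff] at h0'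
  obtain ⟨δ, hδ, hδ'⟩ := h0'
  have hT' : ∀ᶠ x in atTop, |f x| ≤ 1 := by
    have := hT.eventually (eventually_abs_sub_lt 0 one_pos)
    filter_upwards [this] with x hx; simpa using hx.le
  obtain ⟨T, hTT⟩ := eventually_atTop.mp hT'
  set a := δ / 2 with ha
  set b := max T (δ/2) with hb
  have hab : IsCompact (Set.Icc a b) := isCompact_Icc
  obtain ⟨C0, hC0⟩ := hab.exists_bound_of_continuousOn
    (hc.mono (fun x hx => lt_of_lt_of_le (by positivity) hx.1))
  refine ⟨max C0 1, fun x hx => ?_⟩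
  rcases le_or_gt x b with hxb | hxb
  · rcases lt_or_ge x a with hxa | hxa
    · refine le_trans (le_of_eq rfl) ?_
      have : |f x| ≤ 1 := by
        apply hδ' (y := x) _ hx
        rw [Real.dist_eq, sub_zero, abs_of_pos hx]
        calc x < δ/2 := hxa
          _ < δ := by linarith
      exact this.trans (le_max_right _ _)
    · have := hC0 x ⟨hxa, hxb⟩
      rw [Real.norm_eq_abs] at this
      exact this.trans (le_max_left _ _)
  · have : |f x| ≤ 1 := hTT x (le_trans (le_max_left _ _) hxb.le)
    exact this.trans (le_max_right _ _)

lemma K_le_exp_bound (r : ℝ) {s : ℝ} (hs : 0 < s) :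
    ∃ C : ℝ, ∀ x ∈ Set.Ioi (0:ℝ), K r s x ≤ C * Real.exp (-x) := by
  set g : ℝ → ℝ := fun x => Real.exp (Real.log x * r + (1 * x - x ^ 3 - s / x)) with hg
  have hgc : ContinuousOn g (Set.Ioi 0) := by
    apply Real.continuous_exp.comp_continuousOn
    apply ContinuousOn.add
    · exact ((Real.continuousOn_log.mono (by intro x hx; exact ne_of_gt hx)).mul continuousOn_const)
    · apply ContinuousOn.sub
      · exact (continuousOn_id.const_smul (1:ℝ)).sub (continuous_pow 3).continuousOn
      · exact continuousOn_const.div continuousOn_id (fun x hx => ne_of_gt hx)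
  have hg0 : Tendsto g (𝓝[>] 0) (𝓝 0) :=
    (Real.tendsto_exp_atBot).comp (exponent_tendsto_zero r 1 hs)
  have hgT : Tendsto g atTop (𝓝 0) :=
    (Real.tendsto_exp_atBot).comp (exponent_tendsto_atTop r 1 hs)
  obtain ⟨C, hC⟩ := bounded_of_tendsto_zero hgc hg0 hgT
  refine ⟨C, fun x hx => ?_⟩
  have hKg : K r s x = g x * Real.exp (-x) := by
    rw [K_eq_exp hx, hg, ← Real.exp_add]
    ring_nf
  rw [hKg]
  have := hC x hx
  have hgpos : 0 ≤ g x := (Real.exp_pos _).le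
  calc g x * Real.exp (-x) ≤ |g x| * Real.exp (-x) :=
        mul_le_mul_of_nonneg_right (le_abs_self _) (Real.exp_pos _).le
    _ ≤ C * Real.exp (-x) := mul_le_mul_of_nonneg_right this (Real.exp_pos _).le

lemma K_integrableOn (r : ℝ) {s : ℝ} (hs : 0 < s) :
    IntegrableOn (K r s) (Set.Ioi 0) := by
  obtain ⟨C, hC⟩ := K_le_exp_bound r hs
  have hmeas : AEStronglyMeasurable (K r s) (volume.restrict (Set.Ioi 0)) :=
    (K_contOn r s).aestronglyMeasurable measurableSet_Ioi
  apply Integrable.mono' (g := fun x => C * Real.exp (-x)) _ hmeas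
  · filter_upwards [ae_restrict_mem measurableSet_Ioi] with x hx
    rw [Real.norm_eq_abs, abs_of_nonneg (K_nonneg hx)]
    exact hC x hx
  · simpa [neg_one_mul] using ((exp_neg_integrableOn_Ioi 0 one_pos).const_mul C)




lemma hasDerivAt_K_s (r x : ℝ) (hx : 0 < x) (s : ℝ) :
    HasDerivAt (fun u => K r u x) (-K (r - 1) s x) s := by
  have h1 : HasDerivAt (fun u : ℝ => -x ^ 3 - u / x) (-(1 / x)) s := by
    simpa using ((hasDerivAt_id s).div_const x).const_sub (-x ^ 3)
  have h2 := (h1.exp).const_mul (x ^ r : ℝ)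
  refine h2.congr_deriv (Eq.symm ?_)
  have hxne : x ≠ 0 := ne_of_gt hx
  rw [K, Real.rpow_sub hx, Real.rpow_one]
  field_simp

lemma hasDerivAt_M (r : ℝ) {t : ℝ} (ht : 0 < t) :
    HasDerivAt (fun s => M r s) (-M (r - 1) t) t := by
  have key := hasDerivAt_integral_of_dominated_loc_of_deriv_le
    (μ := volume.restrict (Set.Ioi 0)) (F := fun s x => K r s x)
    (F' := fun s x => -K (r - 1) s x) (x₀ := t)
    (bound := K (r - 1) (t / 2)) (s := Metric.ball t (t / 2)) (Metric.ball_mem_nhds t (by positivity))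
    (Filter.Eventually.of_forall fun s =>
      (K_contOn r s).aestronglyMeasurable measurableSet_Ioi)
    (K_integrableOn r ht)
    (((K_contOn (r - 1) t).aestronglyMeasurable measurableSet_Ioi).neg)
    ?_ (K_integrableOn (r - 1) (by positivity)) ?_
  · have h2 : (∫ x in Set.Ioi (0:ℝ), -K (r - 1) t x) = -M (r - 1) t := by
      rw [integral_neg]; rfl
    rw [← h2]
    exact key.2
  · filter_upwards [ae_restrict_mem measurableSet_Ioi] with x hx
    intro s hs
    have hs2 : t / 2 ≤ s := by
      have := abs_lt.mp (by simpa [Real.dist_eq] using hs)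
      linarith [this.1]
    rw [norm_neg, Real.norm_eq_abs, abs_of_nonneg (K_nonneg hx)]
    unfold K
    apply mul_le_mul_of_nonneg_left _ (Real.rpow_nonneg (le_of_lt hx) _)
    apply Real.exp_le_exp.mpr
    have hdd : t / 2 / x ≤ s / x := by
      have hx' : (0:ℝ) < x := hx
      gcongr
    linarith
  · filter_upwards [ae_restrict_mem measurableSet_Ioi] with x hx
    intro s _
    exact hasDerivAt_K_s r x hx s

lemma hasDerivAt_K_x (q s x : ℝ) (hx : 0 < x) :
    HasDerivAt (K q s)
      (q * K (q - 1) s x - 3 * K (q + 2) s x + s * K (q - 2) s x) x := by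
  have h1 : HasDerivAt (fun y : ℝ => y ^ q) (q * x ^ (q - 1)) x :=
    Real.hasDerivAt_rpow_const (Or.inl (ne_of_gt hx))
  have ha : HasDerivAt (fun y : ℝ => -y ^ 3) (-(3 * x ^ 2)) x := by
    simpa using (hasDerivAt_pow 3 x).fun_neg
  have hb : HasDerivAt (fun y : ℝ => s / y) (s * -(x ^ 2)⁻¹) x := by
    simpa [div_eq_mul_inv, mul_comm] using (hasDerivAt_inv (ne_of_gt hx)).const_mul s
  have h2 : HasDerivAt (fun y : ℝ => -y ^ 3 - s / y) (-(3 * x ^ 2) - s * -(x ^ 2)⁻¹) x :=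
    ha.sub hb
  have h3 := h1.mul h2.exp
  have hKfun : K q s = fun y : ℝ => y ^ q * Real.exp (-y ^ 3 - s / y) := rfl
  rw [hKfun]
  refine h3.congr_deriv (Eq.symm ?_)
  have hxne : x ≠ 0 := ne_of_gt hx
  have e2 : x ^ (2:ℝ) = x ^ (2:ℕ) := by
    rw [show (2:ℝ) = ((2:ℕ):ℝ) by norm_num, Real.rpow_natCast]
  rw [K, K, K, Real.rpow_sub hx, Real.rpow_sub hx, Real.rpow_add hx, Real.rpow_one, e2]
  have hx2 : (x:ℝ) ^ (2:ℕ) ≠ 0 := pow_ne_zero _ hxne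
  field_simp
  ring

lemma M_ibp (q : ℝ) {s : ℝ} (hs : 0 < s) :
    q * M (q - 1) s - 3 * M (q + 2) s + s * M (q - 2) s = 0 := by
  set G : ℝ → ℝ := fun x => q * K (q - 1) s x - 3 * K (q + 2) s x + s * K (q - 2) s x with hG
  have Gint : IntegrableOn G (Set.Ioi 0) :=
    ((((K_integrableOn (q - 1) hs).const_mul q).sub
      ((K_integrableOn (q + 2) hs).const_mul 3)).add
      ((K_integrableOn (q - 2) hs).const_mul s))
  have hstep : ∀ ε : ℝ, 0 < ε → (∫ x in Set.Ioi ε, G x) = -K q s ε := by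
    intro ε hε
    have hder : ∀ x ∈ Set.Ioi ε, HasDerivAt (K q s) (G x) x :=
      fun x hx => hasDerivAt_K_x q s x (hε.trans hx)
    have hcont : ContinuousWithinAt (K q s) (Set.Ici ε) ε :=
      ((hasDerivAt_K_x q s ε hε).continuousAt).continuousWithinAt
    have := integral_Ioi_of_hasDerivAt_of_tendsto hcont hder
      (Gint.mono_set (Set.Ioi_subset_Ioi hε.le)) (K_tendsto_atTop q hs)
    rw [this]; ring
  have hu0 : Tendsto (fun n : ℕ => ((n:ℝ) + 1)⁻¹) atTop (𝓝 0) := by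
    simpa [one_div] using tendsto_one_div_add_atTop_nhds_zero_nat (𝕜 := ℝ)
  have hu : Tendsto (fun n : ℕ => ((n:ℝ) + 1)⁻¹) atTop (𝓝[>] (0:ℝ)) := by
    apply tendsto_nhdsWithin_of_tendsto_nhds_of_eventually_within _ hu0
    exact Filter.Eventually.of_forall fun n => Set.mem_Ioi.mpr (by positivity)
  have hU : (⋃ n : ℕ, Set.Ioi (((n:ℝ) + 1)⁻¹)) = Set.Ioi (0:ℝ) := by
    ext x
    simp only [Set.mem_iUnion, Set.mem_Ioi]
    constructor
    · rintro ⟨n, hn⟩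
      exact lt_trans (by positivity) hn
    · intro hx
      obtain ⟨n, hn⟩ := exists_nat_one_div_lt hx
      exact ⟨n, by rwa [one_div] at hn⟩
  have h1 : Tendsto (fun n : ℕ => ∫ x in Set.Ioi (((n:ℝ) + 1)⁻¹), G x) atTop
      (𝓝 (∫ x in Set.Ioi (0:ℝ), G x)) := by
    have := tendsto_setIntegral_of_monotone (s := fun n : ℕ => Set.Ioi (((n:ℝ) + 1)⁻¹))
      (fun n => measurableSet_Ioi)
      (fun a b hab => Set.Ioi_subset_Ioi (by
        have hcast : (a:ℝ) ≤ b := Nat.cast_le.mpr hab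
        have ha : (0:ℝ) < (a:ℝ) + 1 := by positivity
        apply inv_anti₀ ha (by linarith)))
      (by rwa [hU])
    rwa [hU] at this
  have h2 : Tendsto (fun n : ℕ => -K q s (((n:ℝ) + 1)⁻¹)) atTop (𝓝 (0:ℝ)) := by
    have := ((K_tendsto_zero q hs).comp hu).neg
    simpa using this
  have h1' : Tendsto (fun n : ℕ => ∫ x in Set.Ioi (((n:ℝ) + 1)⁻¹), G x) atTop (𝓝 (0:ℝ)) := by
    apply h2.congr
    intro n
    exact (hstep _ (by positivity)).symm
  have hint0 : (∫ x in Set.Ioi (0:ℝ), G x) = 0 := tendsto_nhds_unique h1 h1'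
  have hexp : (∫ x in Set.Ioi (0:ℝ), G x)
      = q * M (q - 1) s - 3 * M (q + 2) s + s * M (q - 2) s := by
    have h12 : Integrable (fun x => q * K (q - 1) s x - 3 * K (q + 2) s x)
        (volume.restrict (Set.Ioi 0)) := by
      exact ((K_integrableOn (q - 1) hs).const_mul q).sub
        ((K_integrableOn (q + 2) hs).const_mul 3)
    have h3 : Integrable (fun x => s * K (q - 2) s x) (volume.restrict (Set.Ioi 0)) :=
      (K_integrableOn (q - 2) hs).const_mul s
    have ha : Integrable (fun x => q * K (q - 1) s x) (volume.restrict (Set.Ioi 0)) :=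
      (K_integrableOn (q - 1) hs).const_mul q
    have hb : Integrable (fun x => 3 * K (q + 2) s x) (volume.restrict (Set.Ioi 0)) :=
      (K_integrableOn (q + 2) hs).const_mul 3
    calc (∫ x in Set.Ioi (0:ℝ), G x)
        = (∫ x in Set.Ioi (0:ℝ), (q * K (q - 1) s x - 3 * K (q + 2) s x))
          + ∫ x in Set.Ioi (0:ℝ), s * K (q - 2) s x := integral_add h12 h3
      _ = ((∫ x in Set.Ioi (0:ℝ), q * K (q - 1) s x)
          - ∫ x in Set.Ioi (0:ℝ), 3 * K (q + 2) s x)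
          + ∫ x in Set.Ioi (0:ℝ), s * K (q - 2) s x := by rw [integral_sub ha hb]
      _ = q * M (q - 1) s - 3 * M (q + 2) s + s * M (q - 2) s := by
          simp only [integral_const_mul]; rfl
  rw [← hexp, hint0]




lemma pow_mul_K {l s x : ℝ} (hx : 0 < x) (k : ℕ) :
    x ^ k * K l s x = K (l + k) s x := by
  rw [K, K, Real.rpow_add hx, ← Real.rpow_natCast x k]
  ring

noncomputable def J (l : ℝ) (q : Polynomial ℝ) (s : ℝ) : ℝ :=
  ∫ x in Set.Ioi (0:ℝ), q.eval x * K l s x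

lemma J_eqOn (l : ℝ) (q : Polynomial ℝ) (s : ℝ) {D : ℕ} (hD : q.natDegree < D) :
    ∀ x ∈ Set.Ioi (0:ℝ),
      q.eval x * K l s x = ∑ k ∈ Finset.range D, q.coeff k * K (l + k) s x := by
  intro x hx
  rw [Polynomial.eval_eq_sum_range' hD, Finset.sum_mul]
  apply Finset.sum_congr rfl
  intro k _
  rw [mul_assoc, pow_mul_K hx]

lemma J_integrableOn (l : ℝ) (q : Polynomial ℝ) {s : ℝ} (hs : 0 < s) :
    IntegrableOn (fun x => q.eval x * K l s x) (Set.Ioi 0) := by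
  have hsum : IntegrableOn
      (fun x => ∑ k ∈ Finset.range (q.natDegree + 1), q.coeff k * K (l + k) s x)
      (Set.Ioi 0) := by
    apply integrable_finset_sum
    intro k _
    exact (K_integrableOn (l + k) hs).const_mul _
  exact hsum.congr_fun
    (fun x hx => (J_eqOn l q s (Nat.lt_succ_self _) x hx).symm) measurableSet_Ioi

lemma J_eq_sum (l : ℝ) (q : Polynomial ℝ) {s : ℝ} (hs : 0 < s) {D : ℕ}
    (hD : q.natDegree < D) :
    J l q s = ∑ k ∈ Finset.range D, q.coeff k * M (l + k) s := by
  rw [J, setIntegral_congr_fun measurableSet_Ioi (J_eqOn l q s hD)]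
  have := integral_finset_sum (μ := volume.restrict (Set.Ioi 0)) (Finset.range D)
    (f := fun k x => q.coeff k * K (l + k) s x)
    (fun k _ => (K_integrableOn (l + k) hs).const_mul _)
  rw [this]
  exact Finset.sum_congr rfl fun k _ => integral_const_mul _ _

lemma J_add (l : ℝ) (p q : Polynomial ℝ) {s : ℝ} (hs : 0 < s) :
    J l (p + q) s = J l p s + J l q s := by
  rw [J, J, J, ← integral_add (J_integrableOn l p hs) (J_integrableOn l q hs)]
  apply setIntegral_congr_fun measurableSet_Ioi
  intro x _
  simp [add_mul]

lemma J_C_mul (l : ℝ) (c : ℝ) (q : Polynomial ℝ) (s : ℝ) :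
    J l (Polynomial.C c * q) s = c * J l q s := by
  rw [J, J, ← integral_const_mul]
  apply setIntegral_congr_fun measurableSet_Ioi
  intro x _
  simp [mul_assoc]

lemma J_zero (l s : ℝ) : J l 0 s = 0 := by
  simp [J]

lemma J_X_mul (l : ℝ) (q : Polynomial ℝ) (s : ℝ) :
    J l (Polynomial.X * q) s = J (l + 1) q s := by
  rw [J, J]
  apply setIntegral_congr_fun measurableSet_Ioi
  intro x hx
  dsimp only
  rw [Polynomial.eval_mul, Polynomial.eval_X]
  have := pow_mul_K (l := l) (s := s) hx 1
  rw [pow_one] at this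
  rw [show (l + 1 : ℝ) = l + (1:ℕ) by norm_num, ← this]
  ring

lemma J_mul3 (l : ℝ) (a2 a3 : ℝ) (A1 A2 A3 w : Polynomial ℝ) {s : ℝ} (hs : 0 < s) :
    J l ((A1 + Polynomial.C a2 * A2 + Polynomial.C a3 * A3) * w) s
      = J l (A1 * w) s + a2 * J l (A2 * w) s + a3 * J l (A3 * w) s := by
  have e : (A1 + Polynomial.C a2 * A2 + Polynomial.C a3 * A3) * w
      = A1 * w + (Polynomial.C a2 * (A2 * w) + Polynomial.C a3 * (A3 * w)) := by ring
  rw [e, J_add l _ _ hs, J_add l _ _ hs, J_C_mul, J_C_mul]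
  ring




structure OPSH (lam s : ℝ) (P : ℕ → Polynomial ℝ) (h a b : ℕ → ℝ) : Prop where
  hs : 0 < s
  monic : ∀ n, (P n).Monic
  deg : ∀ n, (P n).natDegree = n
  hpos : ∀ n, 0 < h n
  orth : ∀ m n, J lam (P m * P n) s = if m = n then h n else 0
  p0 : P 0 = 1
  rrec : ∀ n, Polynomial.X * P n
      = P (n + 1) + Polynomial.C (a n) * P n + Polynomial.C (b n) * P (n - 1)
  b0 : b 0 = 0

namespace OPSH

variable {lam s : ℝ} {P : ℕ → Polynomial ℝ} {h a b : ℕ → ℝ}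
variable (o : OPSH lam s P h a b)
include o

lemma coeff_self (n : ℕ) : (P n).coeff n = 1 := by
  have := (o.monic n).coeff_natDegree
  rwa [o.deg n] at this

lemma ortho_aux : ∀ d : ℕ, ∀ q : Polynomial ℝ, ∀ n : ℕ, q.natDegree ≤ d → d < n →
    J lam (q * P n) s = 0 := by
  intro d
  induction d with
  | zero =>
    intro q n hq hn
    have hqC : q = Polynomial.C (q.coeff 0) := eq_C_of_natDegree_le_zero hq
    have e : q * P n = Polynomial.C (q.coeff 0) * (P 0 * P n) := by
      rw [o.p0, one_mul, ← hqC]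
    rw [e, J_C_mul, o.orth 0 n, if_neg (by omega)]
    ring
  | succ d ih =>
    intro q n hq hn
    set c := q.coeff (d + 1) with hc
    set r := q - Polynomial.C c * P (d + 1) with hr
    have hCP : (Polynomial.C c * P (d + 1)).natDegree ≤ d + 1 := by
      apply le_trans (Polynomial.natDegree_mul_le)
      simp [o.deg]
    have hr1 : r.natDegree ≤ d + 1 :=
      le_trans (Polynomial.natDegree_sub_le _ _) (max_le hq hCP)
    have hr2 : r.coeff (d + 1) = 0 := by
      rw [hr, Polynomial.coeff_sub, Polynomial.coeff_C_mul, o.coeff_self]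
      ring
    have hrd : r.natDegree ≤ d := by
      have := Polynomial.natDegree_le_pred hr1 hr2
      simpa using this
    have hqe : q * P n = r * P n + Polynomial.C c * (P (d + 1) * P n) := by
      rw [hr]; ring
    rw [hqe, J_add lam _ _ o.hs, J_C_mul, ih r n hrd (by omega), o.orth (d + 1) n,
      if_neg (by omega)]
    ring

lemma ortho_lt (q : Polynomial ℝ) (n : ℕ) (hq : q.natDegree < n) :
    J lam (q * P n) s = 0 :=
  o.ortho_aux q.natDegree q n le_rfl hq

lemma ortho_le (q : Polynomial ℝ) (n : ℕ) (hq : q.natDegree ≤ n) :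
    J lam (q * P n) s = q.coeff n * h n := by
  set c := q.coeff n with hc
  set r := q - Polynomial.C c * P n with hr
  have hCP : (Polynomial.C c * P n).natDegree ≤ n := by
    apply le_trans (Polynomial.natDegree_mul_le)
    simp [o.deg]
  have hr1 : r.natDegree ≤ n := le_trans (Polynomial.natDegree_sub_le _ _) (max_le hq hCP)
  have hr2 : r.coeff n = 0 := by
    rw [hr, Polynomial.coeff_sub, Polynomial.coeff_C_mul, o.coeff_self]
    ring
  have hrzero : J lam (r * P n) s = 0 := by
    cases n with
    | zero =>
      have : r = 0 := by
        have := eq_C_of_natDegree_le_zero hr1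
        rw [hr2] at this
        simpa using this
      rw [this, zero_mul, J_zero]
    | succ m =>
      exact o.ortho_aux m r (m + 1) (by simpa using Polynomial.natDegree_le_pred hr1 hr2)
        (by omega)
  have hqe : q * P n = r * P n + Polynomial.C c * (P n * P n) := by
    rw [hr]; ring
  rw [hqe, J_add lam _ _ o.hs, J_C_mul, hrzero, o.orth n n, if_pos rfl]
  ring

lemma JxP (k i : ℕ) :
    J lam ((Polynomial.X * P k) * P i) s
      = (if k + 1 = i then h i else 0) + a k * (if k = i then h i else 0)
        + b k * (if k - 1 = i then h i else 0) := by
  rw [o.rrec k, J_mul3 lam _ _ _ _ _ _ o.hs, o.orth, o.orth, o.orth]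

lemma h_eq (n : ℕ) : h n = J lam (P n * P n) s := by
  rw [o.orth n n, if_pos rfl]

lemma beta_h {n : ℕ} (hn : 1 ≤ n) : b n * h (n - 1) = h n := by
  have h1 : J lam ((Polynomial.X * P (n - 1)) * P n) s = h n := by
    rw [o.JxP]
    rw [if_pos (by omega), if_neg (by omega), if_neg (by omega)]
    ring
  have h2 : J lam ((Polynomial.X * P n) * P (n - 1)) s = b n * h (n - 1) := by
    rw [o.JxP]
    rw [if_neg (by omega), if_neg (by omega), if_pos (by omega)]
    ring
  have e : (Polynomial.X * P (n - 1)) * P n = (Polynomial.X * P n) * P (n - 1) := by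
    ring
  rw [← h2, ← e, h1]

lemma alpha_h (n : ℕ) : J lam ((Polynomial.X * P n) * P n) s = a n * h n := by
  rw [o.JxP]
  cases n with
  | zero => simp [o.b0]
  | succ m =>
    rw [if_neg (by omega), if_pos rfl, if_neg (by omega)]
    ring

lemma v2 (k : ℕ) : J lam ((Polynomial.X * P k) * P (k + 1)) s = h (k + 1) := by
  rw [o.JxP, if_pos rfl, if_neg (by omega), if_neg (by omega)]
  ring

lemma v3 {k : ℕ} (hk : 1 ≤ k) :
    J lam ((Polynomial.X * P k) * P (k - 1)) s = b k * h (k - 1) := by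
  rw [o.JxP, if_neg (by omega), if_neg (by omega), if_pos rfl]
  ring

lemma v6 (k : ℕ) :
    J lam ((Polynomial.X * P (k + 1)) * P k) s = b (k + 1) * h k := by
  rw [o.JxP, if_neg (by omega), if_neg (by omega), if_pos (by omega)]
  ring

lemma v4a {m : ℕ} (hm : 1 ≤ m) :
    J lam ((Polynomial.X * P (m + 1)) * P (m - 1)) s = 0 := by
  rw [o.JxP, if_neg (by omega), if_neg (by omega), if_neg (by omega)]
  ring

lemma v4b {m : ℕ} (hm : 1 ≤ m) :
    J lam ((Polynomial.X * P (m - 1)) * P (m + 1)) s = 0 := by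
  rw [o.JxP, if_neg (by omega), if_neg (by omega), if_neg (by omega)]
  ring

lemma v5 {m : ℕ} (hm : 1 ≤ m) :
    J lam ((Polynomial.X * P (m - 1)) * P m) s = h m := by
  rw [o.JxP, if_pos (by omega), if_neg (by omega), if_neg (by omega)]
  ring

lemma Jw (k : ℕ) {m : ℕ} (hm : 1 ≤ m) :
    J lam ((Polynomial.X * P k)
        * (P (m + 1) + Polynomial.C (a m) * P m + Polynomial.C (b m) * P (m - 1))) s
      = J lam ((Polynomial.X * P k) * P (m + 1)) s
        + a m * J lam ((Polynomial.X * P k) * P m) s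
        + b m * J lam ((Polynomial.X * P k) * P (m - 1)) s := by
  have e : (Polynomial.X * P k)
        * (P (m + 1) + Polynomial.C (a m) * P m + Polynomial.C (b m) * P (m - 1))
      = (P (m + 1) + Polynomial.C (a m) * P m + Polynomial.C (b m) * P (m - 1))
        * (Polynomial.X * P k) := by ring
  rw [e, J_mul3 lam _ _ _ _ _ _ o.hs]
  congr 1
  · congr 1
    · exact congrArg (fun z => J lam z s) (mul_comm _ _)
    · exact congrArg (fun z => a m * J lam z s) (mul_comm _ _)
  · exact congrArg (fun z => b m * J lam z s) (mul_comm _ _)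

lemma D_h {m : ℕ} (hm : 1 ≤ m) :
    J lam ((Polynomial.X ^ 3) * P m * P m) s
      = (a (m + 1) * b (m + 1) + 2 * a m * b (m + 1) + a m ^ 3
          + 2 * a m * b m + a (m - 1) * b m) * h m := by
  have e1 : (Polynomial.X ^ 3 : Polynomial ℝ) * P m * P m
      = (Polynomial.X * (Polynomial.X * P m)) * (Polynomial.X * P m) := by ring
  rw [e1, o.rrec m]
  have e2 : Polynomial.X * (P (m + 1) + Polynomial.C (a m) * P m
        + Polynomial.C (b m) * P (m - 1))
      = (Polynomial.X * P (m + 1)) + Polynomial.C (a m) * (Polynomial.X * P m)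
        + Polynomial.C (b m) * (Polynomial.X * P (m - 1)) := by ring
  rw [e2, J_mul3 lam _ _ _ _ _ _ o.hs]
  rw [o.Jw (m + 1) hm, o.Jw m hm, o.Jw (m - 1) hm]
  rw [o.alpha_h (m + 1), o.v6 m, o.v4a hm, o.v2 m, o.alpha_h m, o.v3 hm,
    o.v4b hm, o.v5 hm, o.alpha_h (m - 1)]
  have e3 : b (m + 1) * h m = h (m + 1) := o.beta_h (by omega)
  have e4 : b m * h (m - 1) = h m := o.beta_h hm
  linear_combination (-(a (m + 1) + a m)) * e3 + (a m * b m + a (m - 1) * b m) * e4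

lemma xdP (n : ℕ) :
    J lam ((Polynomial.X * Polynomial.derivative (P n)) * P n) s = n * h n := by
  cases n with
  | zero =>
    rw [o.p0]
    simp [J_zero]
  | succ m =>
    have hdeg : (Polynomial.X * Polynomial.derivative (P (m + 1))).natDegree ≤ m + 1 := by
      apply le_trans (Polynomial.natDegree_mul_le)
      have h1 : (Polynomial.derivative (P (m + 1))).natDegree ≤ m := by
        have := Polynomial.natDegree_derivative_le (P (m + 1))
        rwa [o.deg] at this
      simp only [Polynomial.natDegree_X]
      omega
    rw [o.ortho_le _ _ hdeg]
    rw [Polynomial.coeff_X_mul, Polynomial.coeff_derivative, o.coeff_self]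
    push_cast
    ring

lemma sA (n : ℕ) :
    s * J (lam - 1) (P n * P n) s
      = 3 * J (lam + 3) (P n * P n) s - (lam + 1 + 2 * n) * h n := by
  set q := P n * P n with hq
  have hdeg : q.natDegree < 2 * n + 2 := by
    have h0 := Polynomial.natDegree_mul_le (p := P n) (q := P n)
    rw [← hq, o.deg] at h0
    omega
  have hdq : (Polynomial.X * Polynomial.derivative q).natDegree < 2 * n + 2 := by
    have h1 : (Polynomial.derivative q).natDegree ≤ 2 * n :=
      le_trans (Polynomial.natDegree_derivative_le q) (by omega)
    have h2 : (Polynomial.X : Polynomial ℝ).natDegree = 1 := Polynomial.natDegree_X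
    have h3 := Polynomial.natDegree_mul_le (p := (Polynomial.X : Polynomial ℝ))
      (q := Polynomial.derivative q)
    rw [h2] at h3
    omega
  have hcoeff : ∀ k : ℕ, (Polynomial.X * Polynomial.derivative q).coeff k = k * q.coeff k := by
    intro k
    cases k with
    | zero => simp [Polynomial.mul_coeff_zero]
    | succ j =>
      rw [Polynomial.coeff_X_mul, Polynomial.coeff_derivative]
      push_cast
      ring
  have hsum1 := J_eq_sum (lam - 1) q o.hs hdeg
  have hsum2 := J_eq_sum (lam + 3) q o.hs hdeg
  have hsum3 := J_eq_sum lam q o.hs hdeg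
  have hsum4 := J_eq_sum lam (Polynomial.X * Polynomial.derivative q) o.hs hdq
  have hJq : J lam q s = h n := (o.h_eq n).symm
  have hJdq : J lam (Polynomial.X * Polynomial.derivative q) s = 2 * n * h n := by
    have e : Polynomial.X * Polynomial.derivative q
        = Polynomial.C 2 * ((Polynomial.X * Polynomial.derivative (P n)) * P n) := by
      have h2 : (Polynomial.C (2:ℝ)) = 2 := by
        exact_mod_cast map_ofNat Polynomial.C 2
      rw [hq, Polynomial.derivative_mul, h2]
      ring
    rw [e, J_C_mul, o.xdP]
    ring
  have key : ∀ k : ℕ, s * M (lam - 1 + k) s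
      = 3 * M (lam + 3 + k) s - (lam + 1 + k) * M (lam + k) s := by
    intro k
    have hibp := M_ibp (lam + k + 1) o.hs
    have e1 : lam + k + 1 - 1 = lam + k := by ring
    have e2 : lam + k + 1 + 2 = lam + 3 + k := by ring
    have e3 : lam + k + 1 - 2 = lam - 1 + k := by ring
    rw [e1, e2, e3] at hibp
    linarith
  calc s * J (lam - 1) q s
      = ∑ k ∈ Finset.range (2 * n + 2), q.coeff k * (s * M (lam - 1 + k) s) := by
        rw [hsum1, Finset.mul_sum]
        exact Finset.sum_congr rfl fun k _ => by ring
    _ = ∑ k ∈ Finset.range (2 * n + 2),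
          (3 * (q.coeff k * M (lam + 3 + k) s) - (lam + 1) * (q.coeff k * M (lam + k) s)
            - ((Polynomial.X * Polynomial.derivative q).coeff k * M (lam + k) s)) := by
        apply Finset.sum_congr rfl
        intro k _
        rw [key k, hcoeff k]
        ring
    _ = 3 * J (lam + 3) q s - (lam + 1) * J lam q s
          - J lam (Polynomial.X * Polynomial.derivative q) s := by
        rw [Finset.sum_sub_distrib, Finset.sum_sub_distrib, ← Finset.mul_sum, ← Finset.mul_sum,
          hsum2, hsum3, hsum4]
    _ = 3 * J (lam + 3) (P n * P n) s - (lam + 1 + 2 * n) * h n := by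
        rw [hJq, hJdq]
        ring

end OPSH


end S17

theorem stmt_17
    (lam : ℝ) (hlam : -1 < lam)
    (w : ℝ → ℝ → ℝ)
    (hw : ∀ s : ℝ, 0 < s → ∀ x : ℝ, 0 < x → w s x = x ^ lam * Real.exp (-x ^ 3 - s / x))
    (P : ℕ → ℝ → Polynomial ℝ) (h : ℕ → ℝ → ℝ) (α β : ℕ → ℝ → ℝ)
    (hP : ∀ s : ℝ, 0 < s → ∀ n, (P n s).Monic ∧ (P n s).natDegree = n)
    (hpos : ∀ s : ℝ, 0 < s → ∀ n, 0 < h n s)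
    (horth : ∀ s : ℝ, 0 < s → ∀ m n, ∫ x in Set.Ioi (0 : ℝ),
        (P m s).eval x * (P n s).eval x * w s x = if m = n then h n s else 0)
    (hP0 : ∀ s : ℝ, 0 < s → P 0 s = 1)
    (hrec : ∀ s : ℝ, 0 < s → ∀ n, 1 ≤ n → ∀ x : ℝ, x * (P n s).eval x
        = (P (n + 1) s).eval x + α n s * (P n s).eval x + β n s * (P (n - 1) s).eval x)
    (hrec0 : ∀ s : ℝ, 0 < s → ∀ x : ℝ,
        x * (P 0 s).eval x = (P 1 s).eval x + α 0 s * (P 0 s).eval x)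
    (t : ℝ) (ht : 0 < t)
    : ∀ n : ℕ, 2 ≤ n →
      t * deriv (β n) t
        = β n t * (2 + 3 * α (n - 2) t * β (n - 1) t - 3 * α (n + 1) t * β (n + 1) t
            + 3 * α (n - 1) t * ((α (n - 1) t) ^ 2 + β n t + 2 * β (n - 1) t)
            - 3 * α n t * ((α n t) ^ 2 + β n t + 2 * β (n + 1) t)) := by
  classical
  intro n hn2
  set Bf : ℕ → ℝ → ℝ := fun k u => if k = 0 then 0 else β k u with hBf
  -- construct the orthogonality package for each s > 0
  have hOPS : ∀ s : ℝ, 0 < s → S17.OPSH lam s (fun k => P k s) (fun k => h k s)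
      (fun k => α k s) (fun k => Bf k s) := by
    intro s hs
    refine ⟨hs, fun k => (hP s hs k).1, fun k => (hP s hs k).2, fun k => hpos s hs k,
      ?_, hP0 s hs, ?_, by simp [hBf]⟩
    · intro m k
      rw [← horth s hs m k, S17.J]
      apply setIntegral_congr_fun measurableSet_Ioi
      intro x hx
      dsimp only
      rw [Polynomial.eval_mul, hw s hs x hx]
      rfl
    · intro k
      apply Polynomial.funext
      intro x
      simp only [Polynomial.eval_add, Polynomial.eval_mul, Polynomial.eval_X, Polynomial.eval_C]
      cases k with
      | zero =>
        have hz : Bf 0 s = 0 := by simp [hBf]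
        rw [hz, hrec0 s hs x]
        ring
      | succ m =>
        have hz : Bf (m + 1) s = β (m + 1) s := by simp [hBf]
        rw [hz, hrec s hs (m + 1) (by omega) x]
  -- moment differentiability
  have hMdiff : ∀ r : ℝ, DifferentiableAt ℝ (fun s => S17.M r s) t :=
    fun r => (S17.hasDerivAt_M r ht).differentiableAt
  -- degree bounds
  have hdegPP : ∀ m : ℕ, ∀ s : ℝ, 0 < s → (P m s * P m s).natDegree < 2 * m + 2 := by
    intro m s hs
    have h0 := Polynomial.natDegree_mul_le (p := P m s) (q := P m s)
    rw [(hP s hs m).2] at h0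
    omega
  have hdegXPP : ∀ m : ℕ, ∀ s : ℝ, 0 < s →
      ((Polynomial.X * P m s) * P m s).natDegree < 2 * m + 3 := by
    intro m s hs
    have h0 := Polynomial.natDegree_mul_le (p := Polynomial.X * P m s) (q := P m s)
    have h1 := Polynomial.natDegree_mul_le (p := (Polynomial.X : Polynomial ℝ)) (q := P m s)
    have h2 : (Polynomial.X : Polynomial ℝ).natDegree = 1 := Polynomial.natDegree_X
    rw [(hP s hs m).2] at h0 h1
    rw [h2] at h1
    omega
  -- h and α·h as moment sums
  have hh_eq : ∀ m : ℕ, ∀ s : ℝ, 0 < s → h m s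
      = ∑ k ∈ Finset.range (2 * m + 2), (P m s * P m s).coeff k * S17.M (lam + k) s := by
    intro m s hs
    exact ((hOPS s hs).h_eq m).trans (S17.J_eq_sum lam _ hs (hdegPP m s hs))
  have ha_eq : ∀ m : ℕ, ∀ s : ℝ, 0 < s → α m s * h m s
      = ∑ k ∈ Finset.range (2 * m + 3),
          ((Polynomial.X * P m s) * P m s).coeff k * S17.M (lam + k) s := by
    intro m s hs
    exact ((hOPS s hs).alpha_h m).symm.trans (S17.J_eq_sum lam _ hs (hdegXPP m s hs))
  -- differentiability of coefficients of P m in s, at t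
  have coeff_mul_diff : ∀ (u v : ℝ → Polynomial ℝ),
      (∀ k, DifferentiableAt ℝ (fun s => (u s).coeff k) t) →
      (∀ k, DifferentiableAt ℝ (fun s => (v s).coeff k) t) →
      ∀ k, DifferentiableAt ℝ (fun s => (u s * v s).coeff k) t := by
    intro u v hu hv k
    have e : (fun s => (u s * v s).coeff k)
        = fun s => ∑ p ∈ Finset.HasAntidiagonal.antidiagonal k, (u s).coeff p.1 * (v s).coeff p.2 := by
      funext s
      exact Polynomial.coeff_mul _ _ _
    rw [e]
    exact DifferentiableAt.fun_sum (fun p _ => (hu p.1).mul (hv p.2))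
  have Pdiff : ∀ m k, DifferentiableAt ℝ (fun s => (P m s).coeff k) t := by
    intro m
    induction m using Nat.strong_induction_on with
    | _ m ih =>
      cases m with
      | zero =>
        intro k
        have hev : (fun s => (P 0 s).coeff k) =ᶠ[nhds t] (fun _ => ((1:Polynomial ℝ)).coeff k) := by
          filter_upwards [Ioi_mem_nhds ht] with s hs
          rw [hP0 s hs]
        exact (differentiableAt_const _).congr_of_eventuallyEq hev
      | succ j =>
        have ihj : ∀ k, DifferentiableAt ℝ (fun s => (P j s).coeff k) t := ih j (by omega)
        have ihj' : ∀ k, DifferentiableAt ℝ (fun s => (P (j - 1) s).coeff k) t :=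
          ih (j - 1) (by omega)
        -- differentiability of the moment sums
        have hHd : ∀ (m : ℕ), (∀ k, DifferentiableAt ℝ (fun s => (P m s).coeff k) t) →
            DifferentiableAt ℝ
              (fun s => ∑ k ∈ Finset.range (2 * m + 2),
                (P m s * P m s).coeff k * S17.M (lam + k) s) t := by
          intro m hm
          exact DifferentiableAt.fun_sum
            (fun k _ => (coeff_mul_diff _ _ hm hm k).mul (hMdiff (lam + k)))
        have hAd : DifferentiableAt ℝ
            (fun s => ∑ k ∈ Finset.range (2 * j + 3),
              ((Polynomial.X * P j s) * P j s).coeff k * S17.M (lam + k) s) t := by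
          apply DifferentiableAt.fun_sum
          intro k _
          have hX : ∀ k, DifferentiableAt ℝ (fun s => ((Polynomial.X : Polynomial ℝ)).coeff k) t :=
            fun _ => differentiableAt_const _
        
          exact ((coeff_mul_diff _ _ (coeff_mul_diff _ _ hX ihj) ihj) k).mul (hMdiff (lam + k))
        -- h functions are differentiable
        have hhd : ∀ (m : ℕ), (∀ k, DifferentiableAt ℝ (fun s => (P m s).coeff k) t) →
            DifferentiableAt ℝ (h m) t := by
          intro m hm
          apply (hHd m hm).congr_of_eventuallyEq
          filter_upwards [Ioi_mem_nhds ht] with s hs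
          exact hh_eq m s hs
        have hhj : DifferentiableAt ℝ (h j) t := hhd j ihj
        have hhj' : DifferentiableAt ℝ (h (j - 1)) t := hhd (j - 1) ihj'
        -- α j is differentiable
        have hαj : DifferentiableAt ℝ (α j) t := by
          have hne : h j t ≠ 0 := (hpos t ht j).ne'
          apply ((hAd.div (hHd j ihj) (by rw [← hh_eq j t ht]; exact hne))).congr_of_eventuallyEq
          filter_upwards [Ioi_mem_nhds ht] with s hs
          simp only [Pi.div_apply]
          rw [← hh_eq j s hs, ← ha_eq j s hs]
          have hnz : h j s ≠ 0 := (hpos s hs j).ne'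
          exact (mul_div_cancel_right₀ _ hnz).symm
        -- Bf j is differentiable
        have hβj : DifferentiableAt ℝ (Bf j) t := by
          cases j with
          | zero =>
            have : Bf 0 = fun _ => (0:ℝ) := by funext u; simp [hBf]
            rw [this]
            exact differentiableAt_const _
          | succ i =>
            apply ((hhd (i + 1) ihj).div hhj' ((hpos t ht ((i + 1) - 1)).ne')).congr_of_eventuallyEq
            filter_upwards [Ioi_mem_nhds ht] with s hs
            have hb := (hOPS s hs).beta_h (n := i + 1) (by omega)
            have hnz : h (i + 1 - 1) s ≠ 0 := (hpos s hs _).ne'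
            simp only [Pi.div_apply]
            rw [eq_div_iff hnz]
            exact hb
        -- coefficient recurrence
        have hco : ∀ s : ℝ, 0 < s → ∀ k : ℕ, (P (j + 1) s).coeff k
            = (if k = 0 then 0 else (P j s).coeff (k - 1))
              - α j s * (P j s).coeff k - Bf j s * (P (j - 1) s).coeff k := by
          intro s hs k
          have hr := (hOPS s hs).rrec j
          have h2 : P (j + 1) s = Polynomial.X * P j s - Polynomial.C (α j s) * P j s
              - Polynomial.C (Bf j s) * P (j - 1) s := by
            rw [hr]; ring
          rw [h2, Polynomial.coeff_sub, Polynomial.coeff_sub, Polynomial.coeff_C_mul,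
            Polynomial.coeff_C_mul]
          cases k with
          | zero => simp [Polynomial.mul_coeff_zero]
          | succ i => rw [Polynomial.coeff_X_mul]; simp
        intro k
        have hgd : DifferentiableAt ℝ
            (fun s => (if k = 0 then 0 else (P j s).coeff (k - 1))
              - α j s * (P j s).coeff k - Bf j s * (P (j - 1) s).coeff k) t := by
          apply DifferentiableAt.sub
          apply DifferentiableAt.sub
          · cases k with
            | zero => simp only [if_pos rfl]; exact differentiableAt_const _
            | succ i => simp only [if_neg (Nat.succ_ne_zero i)]; exact ihj (i + 1 - 1)
          · exact hαj.mul (ihj k)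
          · exact hβj.mul (ihj' k)
        apply hgd.congr_of_eventuallyEq
        filter_upwards [Ioi_mem_nhds ht] with s hs
        exact hco s hs k
  -- derivative polynomials
  set DP : ℕ → Polynomial ℝ := fun m => ∑ k ∈ Finset.range m,
    Polynomial.C (deriv (fun s => (P m s).coeff k) t) * Polynomial.X ^ k with hDPdef
  have DPcoeff : ∀ m k, (DP m).coeff k
      = if k < m then deriv (fun s => (P m s).coeff k) t else 0 := by
    intro m k
    rw [hDPdef]
    rw [Polynomial.finset_sum_coeff]
    simp only [Polynomial.coeff_C_mul, Polynomial.coeff_X_pow]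
    rw [Finset.sum_congr rfl (fun i _ => by rw [mul_ite, mul_one, mul_zero])]
    rw [Finset.sum_ite_eq (Finset.range m) k (fun i => deriv (fun s => (P m s).coeff i) t)]
    simp [Finset.mem_range]
  have hDP : ∀ m k, HasDerivAt (fun s => (P m s).coeff k) ((DP m).coeff k) t := by
    intro m k
    by_cases hk : k < m
    · rw [DPcoeff, if_pos hk]
      exact (Pdiff m k).hasDerivAt
    · rw [DPcoeff, if_neg hk]
      have hev : (fun s => (P m s).coeff k) =ᶠ[nhds t] (fun _ => if k = m then (1:ℝ) else 0) := by
        filter_upwards [Ioi_mem_nhds ht] with s hs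
        by_cases hkm : k = m
        · rw [if_pos hkm, hkm]
          have := (hP s hs m).1.coeff_natDegree
          rwa [(hP s hs m).2] at this
        · rw [if_neg hkm]
          apply Polynomial.coeff_eq_zero_of_natDegree_lt
          rw [(hP s hs m).2]
          omega
      exact (hasDerivAt_const t _).congr_of_eventuallyEq hev
  have DPdeg : ∀ m, (DP m).natDegree ≤ m := by
    intro m
    rw [hDPdef]
    apply Polynomial.natDegree_sum_le_of_forall_le
    intro i hi
    refine le_trans (Polynomial.natDegree_C_mul_le _ _) ?_
    rw [Polynomial.natDegree_X_pow]
    exact (Finset.mem_range.mp hi).le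
  have DPcm : ∀ m, (DP m).coeff m = 0 := fun m => by rw [DPcoeff, if_neg (lt_irrefl m)]
  -- derivative of h m
  have hHder : ∀ m : ℕ, HasDerivAt (h m) (- S17.J (lam - 1) (P m t * P m t) t) t := by
    intro m
    have hck : ∀ k, HasDerivAt (fun s => (P m s * P m s).coeff k)
        ((DP m * P m t + P m t * DP m).coeff k) t := by
      intro k
      have e1 : (fun s => (P m s * P m s).coeff k)
          = fun s => ∑ p ∈ Finset.HasAntidiagonal.antidiagonal k, (P m s).coeff p.1 * (P m s).coeff p.2 := by
        funext s
        exact Polynomial.coeff_mul _ _ _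
      have e2 : (DP m * P m t + P m t * DP m).coeff k
          = ∑ p ∈ Finset.HasAntidiagonal.antidiagonal k,
            ((DP m).coeff p.1 * (P m t).coeff p.2 + (P m t).coeff p.1 * (DP m).coeff p.2) := by
        rw [Polynomial.coeff_add, Polynomial.coeff_mul, Polynomial.coeff_mul,
          ← Finset.sum_add_distrib]
      rw [e1, e2]
      exact HasDerivAt.fun_sum (fun p _ => (hDP m p.1).mul (hDP m p.2))
    have hsum : HasDerivAt
        (fun s => ∑ k ∈ Finset.range (2 * m + 2), (P m s * P m s).coeff k * S17.M (lam + k) s)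
        (∑ k ∈ Finset.range (2 * m + 2),
          ((DP m * P m t + P m t * DP m).coeff k * S17.M (lam + k) t
            + (P m t * P m t).coeff k * (- S17.M (lam + k - 1) t))) t :=
      HasDerivAt.fun_sum (fun k _ => (hck k).mul (S17.hasDerivAt_M (lam + k) ht))
    have hfirst : ∑ k ∈ Finset.range (2 * m + 2),
        (DP m * P m t + P m t * DP m).coeff k * S17.M (lam + k) t = 0 := by
      have hdeg : (DP m * P m t + P m t * DP m).natDegree < 2 * m + 2 := by
        have h1 := Polynomial.natDegree_mul_le (p := DP m) (q := P m t)
        have h2 := Polynomial.natDegree_mul_le (p := P m t) (q := DP m)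
        have h3 := DPdeg m
        have h4 := (hP t ht m).2
        have h5 := Polynomial.natDegree_add_le (DP m * P m t) (P m t * DP m)
        omega
      rw [← S17.J_eq_sum lam _ ht hdeg]
      have hJ1 : S17.J lam (DP m * P m t) t = 0 := by
        have := (hOPS t ht).ortho_le (DP m) m (DPdeg m)
        rw [DPcm] at this
        simpa using this
      have hJ2 : S17.J lam (P m t * DP m) t = 0 := by
        rw [show P m t * DP m = DP m * P m t from mul_comm _ _]
        exact hJ1
      rw [S17.J_add lam _ _ ht, hJ1, hJ2]
      norm_num
    have hsecond : ∑ k ∈ Finset.range (2 * m + 2),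
        (P m t * P m t).coeff k * (- S17.M (lam + k - 1) t)
        = - S17.J (lam - 1) (P m t * P m t) t := by
      rw [S17.J_eq_sum (lam - 1) _ ht (hdegPP m t ht), ← Finset.sum_neg_distrib]
      apply Finset.sum_congr rfl
      intro k _
      rw [show lam + (k:ℝ) - 1 = lam - 1 + k from by ring]
      ring
    have hev : h m =ᶠ[nhds t]
        (fun s => ∑ k ∈ Finset.range (2 * m + 2),
          (P m s * P m s).coeff k * S17.M (lam + k) s) := by
      filter_upwards [Ioi_mem_nhds ht] with s hs
      exact hh_eq m s hs
    have hfin := hsum.congr_of_eventuallyEq hev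
    rwa [Finset.sum_add_distrib, hfirst, hsecond, zero_add] at hfin
  -- final assembly
  have hn1 : (1:ℕ) ≤ n - 1 := by omega
  have hne1 : h (n - 1) t ≠ 0 := (hpos t ht (n - 1)).ne'
  have hβq : β n =ᶠ[nhds t] (fun s => h n s / h (n - 1) s) := by
    filter_upwards [Ioi_mem_nhds ht] with s hs
    have hb := (hOPS s hs).beta_h (n := n) (by omega)
    have hnz : h (n - 1) s ≠ 0 := (hpos s hs _).ne'
    have hBn : Bf n s = β n s := by
      rw [hBf]
      exact if_neg (by omega)
    rw [← hBn, eq_div_iff hnz]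
    exact hb
  have hq : HasDerivAt (fun s => h n s / h (n - 1) s)
      ((- S17.J (lam - 1) (P n t * P n t) t * h (n - 1) t
        - h n t * (- S17.J (lam - 1) (P (n - 1) t * P (n - 1) t) t)) / (h (n - 1) t) ^ 2) t :=
    (hHder n).div (hHder (n - 1)) hne1
  have hderivβ : deriv (β n) t
      = (- S17.J (lam - 1) (P n t * P n t) t * h (n - 1) t
        - h n t * (- S17.J (lam - 1) (P (n - 1) t * P (n - 1) t) t)) / (h (n - 1) t) ^ 2 := by
    rw [hβq.deriv_eq]
    exact hq.deriv
  have hsAn := (hOPS t ht).sA n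
  have hsAn1 := (hOPS t ht).sA (n - 1)
  have hX3 : ∀ m : ℕ, S17.J (lam + 3) (P m t * P m t) t
      = S17.J lam ((Polynomial.X : Polynomial ℝ) ^ 3 * P m t * P m t) t := by
    intro m
    have e : (Polynomial.X : Polynomial ℝ) ^ 3 * P m t * P m t
        = Polynomial.X * (Polynomial.X * (Polynomial.X * (P m t * P m t))) := by ring
    rw [e, S17.J_X_mul, S17.J_X_mul, S17.J_X_mul]
    rw [show lam + 1 + 1 + 1 = lam + 3 from by ring]
  have hDn := (hOPS t ht).D_h (m := n) (by omega)
  have hDn1 := (hOPS t ht).D_h (m := n - 1) hn1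
  rw [show n - 1 + 1 = n from by omega, show n - 1 - 1 = n - 2 from by omega] at hDn1
  have hBfk : ∀ k : ℕ, 1 ≤ k → Bf k t = β k t := by
    intro k hk
    rw [hBf]
    exact if_neg (by omega)
  rw [hBfk (n + 1) (by omega), hBfk n (by omega)] at hDn
  rw [hBfk n (by omega), hBfk (n - 1) (by omega)] at hDn1
  have hβh := (hOPS t ht).beta_h (n := n) (by omega)
  rw [hBfk n (by omega)] at hβh
  -- turn sA statements into explicit forms
  rw [hX3 n, hDn] at hsAn
  rw [hX3 (n - 1), hDn1] at hsAn1
  have hcast : ((n - 1 : ℕ) : ℝ) = (n : ℝ) - 1 := by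
    push_cast [Nat.cast_sub (by omega : 1 ≤ n)]
    ring
  rw [hcast] at hsAn1
  rw [hderivβ]
  set A := S17.J (lam - 1) (P n t * P n t) t with hA
  set A1 := S17.J (lam - 1) (P (n - 1) t * P (n - 1) t) t with hA1
  have hclear : (h (n - 1) t) ^ 2 ≠ 0 := pow_ne_zero 2 hne1
  rw [show t * ((-A * h (n - 1) t - h n t * -A1) / h (n - 1) t ^ 2)
      = (t * (-A * h (n - 1) t - h n t * -A1)) / h (n - 1) t ^ 2 from by ring]
  rw [div_eq_iff hclear]
  linear_combination (-(h (n - 1) t)) * hsAn + (h n t) * hsAn1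
    - (2 + 3 * α (n - 2) t * β (n - 1) t - 3 * α (n + 1) t * β (n + 1) t
        + 3 * α (n - 1) t * ((α (n - 1) t) ^ 2 + β n t + 2 * β (n - 1) t)
        - 3 * α n t * ((α n t) ^ 2 + β n t + 2 * β (n + 1) t)) * (h (n - 1) t) * hβh
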